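/- Let J(r, σ) := (2H/κ)(cs(r) − 1) + sn(r)·sin σ, where sn and cs are the generalized sine and cosine for curvature κ ≠ 0. If (r(t), h(t), σ(t)) satisfies r' = cos σ, and 2H = ct(r)·sin σ + σ' with ct(r) = cs(r)/sn(r), then t ↦ J(r(t), σ(t)) is constant. -/

import Mathlib

/-- Generalized sine for curvature `κ ≠ 0`. -/
noncomputable def sn (κ r : ℝ) : ℝ :=
  if 0 < κ then Real.sin (Real.sqrt κ * r) / Real.sqrt κ
  else Real.sinh (Real.sqrt (-κ) * r) / Real.sqrt (-κ)

/-- Generalized cosine for curvature `κ ≠ 0`. -/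
noncomputable def cs (κ r : ℝ) : ℝ :=
  if 0 < κ then Real.cos (Real.sqrt κ * r)
  else Real.cosh (Real.sqrt (-κ) * r)

lemma hasDerivAt_sn (κ : ℝ) (hκ : κ ≠ 0) (x : ℝ) :
    HasDerivAt (sn κ) (cs κ x) x := by
  by_cases h : 0 < κ
  · have hs : Real.sqrt κ ≠ 0 := by positivity
    have h1 : HasDerivAt (fun y : ℝ => Real.sqrt κ * y) (Real.sqrt κ) x := by
      simpa using (hasDerivAt_id x).const_mul (Real.sqrt κ)
    have h2 := ((Real.hasDerivAt_sin (Real.sqrt κ * x)).comp x h1).div_const (Real.sqrt κ)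
    have he : (fun y => Real.sin (Real.sqrt κ * y) / Real.sqrt κ) = sn κ := by
      funext y; simp [sn, h]
    simp only [Function.comp_def] at h2
    rw [he] at h2
    refine h2.congr_deriv ?_
    symm
    field_simp [cs, h]
    simp [cs, h]
  · have hneg : 0 < -κ := by
      rcases lt_or_gt_of_ne hκ with h' | h'
      · linarith
      · exact absurd h' h
    have hs : Real.sqrt (-κ) ≠ 0 := by positivity
    have h1 : HasDerivAt (fun y : ℝ => Real.sqrt (-κ) * y) (Real.sqrt (-κ)) x := by
      simpa using (hasDerivAt_id x).const_mul (Real.sqrt (-κ))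
    have h2 := ((Real.hasDerivAt_sinh (Real.sqrt (-κ) * x)).comp x h1).div_const (Real.sqrt (-κ))
    have he : (fun y => Real.sinh (Real.sqrt (-κ) * y) / Real.sqrt (-κ)) = sn κ := by
      funext y; simp [sn, h]
    simp only [Function.comp_def] at h2
    rw [he] at h2
    refine h2.congr_deriv ?_
    symm
    field_simp [cs, h]
    simp [cs, h]

lemma hasDerivAt_cs (κ : ℝ) (hκ : κ ≠ 0) (x : ℝ) :
    HasDerivAt (cs κ) (-κ * sn κ x) x := by
  by_cases h : 0 < κ
  · have hsq : Real.sqrt κ * Real.sqrt κ = κ := Real.mul_self_sqrt h.le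
    have hs : Real.sqrt κ ≠ 0 := by positivity
    have h1 : HasDerivAt (fun y : ℝ => Real.sqrt κ * y) (Real.sqrt κ) x := by
      simpa using (hasDerivAt_id x).const_mul (Real.sqrt κ)
    have h2 := (Real.hasDerivAt_cos (Real.sqrt κ * x)).comp x h1
    have he : (fun y => Real.cos (Real.sqrt κ * y)) = cs κ := by
      funext y; simp [cs, h]
    simp only [Function.comp_def] at h2
    rw [he] at h2
    refine h2.congr_deriv ?_
    symm
    simp only [sn, if_pos h]
    field_simp
    rw [sq, hsq]
  · have hneg : 0 < -κ := by
      rcases lt_or_gt_of_ne hκ with h' | h'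
      · linarith
      · exact absurd h' h
    have hsq : Real.sqrt (-κ) * Real.sqrt (-κ) = -κ := Real.mul_self_sqrt hneg.le
    have hs : Real.sqrt (-κ) ≠ 0 := by positivity
    have h1 : HasDerivAt (fun y : ℝ => Real.sqrt (-κ) * y) (Real.sqrt (-κ)) x := by
      simpa using (hasDerivAt_id x).const_mul (Real.sqrt (-κ))
    have h2 := (Real.hasDerivAt_cosh (Real.sqrt (-κ) * x)).comp x h1
    have he : (fun y => Real.cosh (Real.sqrt (-κ) * y)) = cs κ := by
      funext y; simp [cs, h]
    simp only [Function.comp_def] at h2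
    rw [he] at h2
    refine h2.congr_deriv ?_
    symm
    simp only [sn, if_neg h]
    field_simp
    rw [sq, hsq]
    ring

/-- The energy `J(r,σ) = (2H/κ)(cs r - 1) + sn r · sin σ` is a first integral of the
profile-curve ODE `r' = cos σ`, `2H = ct(r)·sin σ + σ'`. -/
theorem energy_constant (κ H : ℝ) (hκ : κ ≠ 0) (r σ : ℝ → ℝ)
    (hr : Differentiable ℝ r) (hσ : Differentiable ℝ σ)
    (hsn : ∀ t, sn κ (r t) ≠ 0)
    (hode1 : ∀ t, deriv r t = Real.cos (σ t))
    (hode3 : ∀ t, 2 * H = (cs κ (r t) / sn κ (r t)) * Real.sin (σ t) + deriv σ t) :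
    ∀ t s : ℝ,
      (2 * H / κ) * (cs κ (r t) - 1) + sn κ (r t) * Real.sin (σ t)
        = (2 * H / κ) * (cs κ (r s) - 1) + sn κ (r s) * Real.sin (σ s) := by
  set J : ℝ → ℝ := fun t =>
    (2 * H / κ) * (cs κ (r t) - 1) + sn κ (r t) * Real.sin (σ t) with hJ
  have key : ∀ t, HasDerivAt J 0 t := by
    intro t
    have hrt : HasDerivAt r (Real.cos (σ t)) t := by
      rw [← hode1 t]; exact (hr t).hasDerivAt
    have hσt : HasDerivAt σ (deriv σ t) t := (hσ t).hasDerivAt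
    have hcs : HasDerivAt (fun u => cs κ (r u))
        (-κ * sn κ (r t) * Real.cos (σ t)) t :=
      (hasDerivAt_cs κ hκ (r t)).comp t hrt
    have hsn' : HasDerivAt (fun u => sn κ (r u))
        (cs κ (r t) * Real.cos (σ t)) t :=
      (hasDerivAt_sn κ hκ (r t)).comp t hrt
    have hsin : HasDerivAt (fun u => Real.sin (σ u))
        (Real.cos (σ t) * deriv σ t) t :=
      (Real.hasDerivAt_sin (σ t)).comp t hσt
    have hd : HasDerivAt J
        ((2 * H / κ) * (-κ * sn κ (r t) * Real.cos (σ t))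
          + (cs κ (r t) * Real.cos (σ t) * Real.sin (σ t)
            + sn κ (r t) * (Real.cos (σ t) * deriv σ t))) t :=
      (((hcs.sub_const 1).const_mul (2 * H / κ)).add (hsn'.mul hsin))
    convert hd using 1
    have h3 := hode3 t
    have hne := hsn t
    have : deriv σ t = 2 * H - (cs κ (r t) / sn κ (r t)) * Real.sin (σ t) := by
      linarith
    rw [this]
    field_simp
    ring
  have hc : ∀ t s, J t = J s := by
    intro t s
    have := is_const_of_deriv_eq_zero (f := J)
      (fun u => (key u).differentiableAt) (fun u => (key u).deriv) t s
    exact this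
  exact hc
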